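/- Let g : ℝⁿ → ℝᵐ be continuously differentiable with each component gᵢ convex, and let Ω = {x ∈ ℝⁿ : gᵢ(x) ≤ 0 for all i ∈ {1,…,m}}. Let x ∈ Ω, let d ∈ ℝⁿ satisfy x + α′·d ∈ Ω for all α′ ∈ [0,1], let α ∈ (0,1), t̃ ∈ (0,1), ε > 0, β > 0, δ ∈ (0,1), and let v ∈ ℝⁿ. Define Ĩ = {i ∈ {1,…,m} : gᵢ(x + t̃·d) ≥ −ε}, and assume gᵢ(x + α·d + β·v) ≤ 0 for all i ∈ Ĩ. Then there exists h̄ ∈ ℕ such that x + α·d + δ^{h̄}·β·v ∈ Ω; in particular the adaptive momentum reduction β_k = max_{h∈ℕ}{δ^h·β : x + α·d + δ^h·β·v ∈ Ω} is well defined and returns β_k > 0. -/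

import Mathlib

open Filter

lemma segA {n m : ℕ} (g : EuclideanSpace ℝ (Fin n) → Fin m → ℝ)
    (hg_conv : ∀ i, ConvexOn ℝ Set.univ (fun y => g y i))
    (y0 v : EuclideanSpace ℝ (Fin n)) (c θ : ℝ) (hθ0 : 0 ≤ θ) (hθ1 : θ ≤ 1)
    (i : Fin m) (h0 : g y0 i ≤ 0) (h1 : g (y0 + c • v) i ≤ 0) :
    g (y0 + (θ * c) • v) i ≤ 0 := by
  have key : y0 + (θ * c) • v = (1 - θ) • y0 + θ • (y0 + c • v) := by module
  rw [key]
  have := (hg_conv i).2 (Set.mem_univ y0) (Set.mem_univ (y0 + c • v))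
    (by linarith : (0:ℝ) ≤ 1 - θ) hθ0 (by ring)
  simp only [smul_eq_mul] at this
  nlinarith

theorem stmt_11 {n m : ℕ} (g : EuclideanSpace ℝ (Fin n) → Fin m → ℝ)
    (hg_smooth : ∀ i, ContDiff ℝ 1 (fun y => g y i))
    (hg_conv : ∀ i, ConvexOn ℝ Set.univ (fun y => g y i))
    (x : EuclideanSpace ℝ (Fin n)) (hx : ∀ i, g x i ≤ 0)
    (d : EuclideanSpace ℝ (Fin n))
    (hd_feas : ∀ α' ∈ Set.Icc (0 : ℝ) 1, ∀ i, g (x + α' • d) i ≤ 0)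
    (α ttil ε β δ : ℝ)
    (hα : α ∈ Set.Ioo (0 : ℝ) 1) (httil : ttil ∈ Set.Ioo (0 : ℝ) 1)
    (hε : 0 < ε) (hβ : 0 < β) (hδ : δ ∈ Set.Ioo (0 : ℝ) 1)
    (v : EuclideanSpace ℝ (Fin n))
    (hfeas : ∀ i, -ε ≤ g (x + ttil • d) i → g (x + α • d + β • v) i ≤ 0) :
    (∃ hbar : ℕ, ∀ i, g (x + α • d + (δ ^ hbar * β) • v) i ≤ 0) ∧
    (∃ βk : ℝ, 0 < βk ∧
      (∃ h : ℕ, βk = δ ^ h * β ∧ ∀ i, g (x + α • d + βk • v) i ≤ 0) ∧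
      ∀ h : ℕ, (∀ i, g (x + α • d + (δ ^ h * β) • v) i ≤ 0) → δ ^ h * β ≤ βk) := by
  classical
  have hy0 : ∀ i, g (x + α • d) i ≤ 0 := hd_feas α ⟨hα.1.le, hα.2.le⟩
  -- strict negativity at x + α d for inactive constraints
  have hstrict : ∀ i, g (x + ttil • d) i < -ε → g (x + α • d) i < 0 := by
    intro i hi
    rcases le_or_gt α ttil with hle | hlt
    · set a := α / ttil with ha_def
      have ha0 : 0 < a := div_pos hα.1 httil.1
      have ha1 : a ≤ 1 := (div_le_one httil.1).2 hle
      have hαa : α = a * ttil := by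
        rw [ha_def]; exact (div_mul_cancel₀ α httil.1.ne').symm
      have key : x + α • d = (1 - a) • x + a • (x + ttil • d) := by
        rw [hαa]; module
      rw [key]
      have := (hg_conv i).2 (Set.mem_univ x) (Set.mem_univ (x + ttil • d))
        (by linarith : (0:ℝ) ≤ 1 - a) ha0.le (by ring)
      simp only [smul_eq_mul] at this
      nlinarith [hx i]
    · set b := (α - ttil) / (1 - ttil) with hb_def
      have hb0 : 0 < b := div_pos (by linarith) (by linarith [httil.2])
      have hb1 : b < 1 := (div_lt_one (by linarith [httil.2])).2 (by linarith [hα.2])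
      have hbb : b * (1 - ttil) = α - ttil := by
        rw [hb_def]; exact div_mul_cancel₀ _ (by linarith [httil.2] : (1:ℝ) - ttil ≠ 0)
      have hαb : α = (1 - b) * ttil + b := by linear_combination -hbb
      have key : x + α • d = (1 - b) • (x + ttil • d) + b • (x + d) := by
        rw [hαb]; module
      rw [key]
      have hxd : g (x + d) i ≤ 0 := by
        have := hd_feas 1 ⟨zero_le_one, le_refl 1⟩ i
        simpa using this
      have := (hg_conv i).2 (Set.mem_univ (x + ttil • d)) (Set.mem_univ (x + d))
        (by linarith : (0:ℝ) ≤ 1 - b) hb0.le (by ring)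
      simp only [smul_eq_mul] at this
      nlinarith
  have hev : ∀ i, ∀ᶠ h : ℕ in atTop, g (x + α • d + (δ ^ h * β) • v) i ≤ 0 := by
    intro i
    rcases lt_or_ge (g (x + ttil • d) i) (-ε) with hlt | hge
    · have hcont : Continuous fun s : ℝ => g (x + α • d + s • v) i :=
        (hg_smooth i).continuous.comp
          (continuous_const.add (continuous_id.smul continuous_const))
      have hlim : Tendsto (fun h : ℕ => δ ^ h * β) atTop (nhds 0) := by
        have h1 : Tendsto (fun h : ℕ => δ ^ h) atTop (nhds 0) :=
          tendsto_pow_atTop_nhds_zero_of_lt_one hδ.1.le hδ.2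
        simpa using h1.mul_const β
      have hT : Tendsto (fun h : ℕ => g (x + α • d + (δ ^ h * β) • v) i) atTop
          (nhds (g (x + α • d) i)) := by
        have := (hcont.tendsto 0).comp hlim
        simpa [Function.comp_def] using this
      have hneg := hstrict i hlt
      filter_upwards [hT.eventually (eventually_lt_nhds hneg)] with h hh using hh.le
    · apply Filter.Eventually.of_forall
      intro h
      exact segA g hg_conv (x + α • d) v β (δ ^ h)
        (pow_nonneg hδ.1.le h) (pow_le_one₀ hδ.1.le hδ.2.le)
        i (hy0 i) (hfeas i hge)
  obtain ⟨hbar, hPbar⟩ := (Filter.eventually_all.2 hev).exists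
  refine ⟨⟨hbar, hPbar⟩, ?_⟩
  -- monotonicity: feasibility is upward closed in h
  have hmono : ∀ h h' : ℕ, h ≤ h' →
      (∀ i, g (x + α • d + (δ ^ h * β) • v) i ≤ 0) →
      (∀ i, g (x + α • d + (δ ^ h' * β) • v) i ≤ 0) := by
    intro h h' hle hP i
    have hr : δ ^ h' * β = δ ^ (h' - h) * (δ ^ h * β) := by
      rw [← mul_assoc, ← pow_add]
      congr 2
      omega
    rw [hr]
    exact segA g hg_conv (x + α • d) v (δ ^ h * β) (δ ^ (h' - h))
      (pow_nonneg hδ.1.le _) (pow_le_one₀ hδ.1.le hδ.2.le) i (hy0 i) (hP i)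
  set P : ℕ → Prop := fun h => ∀ i, g (x + α • d + (δ ^ h * β) • v) i ≤ 0 with hP_def
  have hex : ∃ h, P h := ⟨hbar, hPbar⟩
  set h0 := Nat.find hex with hh0
  refine ⟨δ ^ h0 * β, mul_pos (pow_pos hδ.1 h0) hβ, ⟨h0, rfl, Nat.find_spec hex⟩, ?_⟩
  intro h hPh
  have hle : h0 ≤ h := Nat.find_min' hex hPh
  have : δ ^ h ≤ δ ^ h0 := pow_le_pow_of_le_one hδ.1.le hδ.2.le hle
  nlinarith
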